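/- arXiv:0706.1483 — 3 statements merged into one kernel-verified Lean document; each statement's English description precedes it below -/
import Mathlib

section
/- Let C = (θ_j, l_j)_{j∈ℤ/pℤ} be a simple cycle of length p for (τ_d)_{d∈D}. Then for every k ∈ ℤ^d and j ∈ ℤ/pℤ there exists a unique sequence ω : ℕ → D such that for all x ∈ ℝ^d and all n ∈ ℕ: τ_{ω_{n−1}}∘⋯∘τ_{ω_0}(x) − (A^T)^{−n}(x + k − θ_j) − θ_{j+n} ∈ ℤ^d (for n = 0 the composition is the identity). Moreover, writing R_C^n(k, j) = (a_n, j + n) (so a_0 = k), the digits are given by ω_n = (a_n − θ_{j+n}) − A^T(a_{n+1} − θ_{j+n+1}) for all n ∈ ℕ, and ω is eventually periodic: there exist N ∈ ℕ and q ≥ 1 with ω_{n+q} = ω_n for all n ≥ N. -/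
open Matrix MeasureTheory Filter Topology

noncomputable section

/-- The integer lattice ℤ^d inside ℝ^d. -/
def intLattice (d : ℕ) : AddSubgroup (Fin d → ℝ) where
  carrier := {x | ∀ i, ∃ k : ℤ, x i = (k : ℝ)}
  zero_mem' := fun i => ⟨0, by simp⟩
  add_mem' := by
    intro x y hx hy i
    obtain ⟨a, ha⟩ := hx i
    obtain ⟨b, hb⟩ := hy i
    exact ⟨a + b, by simp [ha, hb]⟩
  neg_mem' := by
    intro x hx i
    obtain ⟨a, ha⟩ := hx i
    exact ⟨-a, by simp [ha]⟩

/-- The torus ℝ^d / ℤ^d. -/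
abbrev Torus (d : ℕ) := (Fin d → ℝ) ⧸ intLattice d

/-- The quotient homomorphism π : ℝ^d → 𝕋^d. -/
def torusMk (d : ℕ) : (Fin d → ℝ) →+ Torus d := QuotientAddGroup.mk' (intLattice d)

/-- A square integer matrix is expansive if all of its complex eigenvalues `μ`
satisfy `|μ| > 1`. -/
def Expansive {d : ℕ} (A : Matrix (Fin d) (Fin d) ℤ) : Prop :=
  ∀ μ : ℂ, (Matrix.charpoly (A.map (Int.cast : ℤ → ℂ))).IsRoot μ → 1 < ‖μ‖

/-- The real matrix associated to an integer matrix. -/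
def toR {d : ℕ} (A : Matrix (Fin d) (Fin d) ℤ) : Matrix (Fin d) (Fin d) ℝ :=
  A.map (Int.cast : ℤ → ℝ)

lemma latticeMap_aux {d : ℕ} (M : Matrix (Fin d) (Fin d) ℤ) :
    intLattice d ≤ (intLattice d).comap (toR M).mulVecLin.toAddMonoidHom := by
  intro x hx
  choose k hk using hx
  intro i
  refine ⟨∑ j, M i j * k j, ?_⟩
  have : (toR M).mulVecLin.toAddMonoidHom x i = ∑ j, (M i j : ℝ) * (k j : ℝ) := by
    simp [toR, Matrix.mulVec, dotProduct, hk, Matrix.map_apply]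
  rw [this]
  push_cast
  ring

/-- The endomorphism of the torus induced by an integer matrix. -/
def torusHom {d : ℕ} (M : Matrix (Fin d) (Fin d) ℤ) : Torus d →+ Torus d :=
  QuotientAddGroup.map _ _ (toR M).mulVecLin.toAddMonoidHom (latticeMap_aux M)

/-- The solenoid `S_A`, as an additive subgroup of `(𝕋^d)^ℕ`. -/
def solenoid {d : ℕ} (A : Matrix (Fin d) (Fin d) ℤ) : AddSubgroup (ℕ → Torus d) where
  carrier := {z | ∀ n, torusHom Aᵀ (z (n + 1)) = z n}
  zero_mem' := by intro n; simp
  add_mem' := by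
    intro a b ha hb n
    simp only [Pi.add_apply, map_add, ha n, hb n]
  neg_mem' := by
    intro a ha n
    simp only [Pi.neg_apply, map_neg, ha n]

/-- The shift automorphism σ_A of the solenoid (written on the ambient space). -/
def sigmaA {d : ℕ} (A : Matrix (Fin d) (Fin d) ℤ) (z : ℕ → Torus d) : ℕ → Torus d
  | 0 => torusHom Aᵀ (z 0)
  | n + 1 => z n

/-- The embedding î : ℝ^d → S_A, î(x) = (π((Aᵀ)^{-n} x))ₙ. -/
def ihat {d : ℕ} (A : Matrix (Fin d) (Fin d) ℤ) (x : Fin d → ℝ) : ℕ → Torus d :=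
  fun n => torusMk d ((((toR A)ᵀ)⁻¹ ^ n).mulVec x)

end

/-- D is a complete set of representatives of ℤ^d / Aᵀℤ^d. -/
def CompleteDigits {d : ℕ} (A : Matrix (Fin d) (Fin d) ℤ) (D : Set (Fin d → ℤ)) : Prop :=
  ∀ x : Fin d → ℤ, ∃! v : Fin d → ℤ, v ∈ D ∧ ∃ y : Fin d → ℤ, x - v = Aᵀ.mulVec y

/-- The affine map τ_v(x) = (Aᵀ)⁻¹(x + v) for a digit v ∈ ℤ^d. -/
noncomputable def tauD {d : ℕ} (A : Matrix (Fin d) (Fin d) ℤ) (v : Fin d → ℤ)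
    (x : Fin d → ℝ) : Fin d → ℝ :=
  (((toR A)ᵀ)⁻¹).mulVec (x + fun i => (v i : ℝ))

/-- The attractor X(Aᵀ, D) = { ∑_{j≥1} (Aᵀ)^{−j} d_j : d_j ∈ D }. -/
def attractor (d : ℕ) (A : Matrix (Fin d) (Fin d) ℤ) (D : Set (Fin d → ℤ)) :
    Set (Fin d → ℝ) :=
  {x | ∃ dig : ℕ → Fin d → ℤ, (∀ j, dig j ∈ D) ∧
    HasSum (fun j : ℕ => ((((toR A)ᵀ)⁻¹) ^ (j + 1)).mulVec fun i => (dig j i : ℝ)) x}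

/-- Iterated maps: tauWord ω n = τ_{ω_{n−1}} ∘ ⋯ ∘ τ_{ω_0} (identity for n = 0). -/
noncomputable def tauWord {d : ℕ} (A : Matrix (Fin d) (Fin d) ℤ)
    (ω : ℕ → Fin d → ℤ) : ℕ → (Fin d → ℝ) → Fin d → ℝ
  | 0 => fun x => x
  | n + 1 => fun x => tauD A (ω n) (tauWord A ω n x)

/-- The decoding map 𝔡 : ℝ^d × Ω → S_A, 𝔡(x,ω)_n = π(τ_{ω_{n−1}}⋯τ_{ω_0} x). -/
noncomputable def codeMap {d : ℕ} (A : Matrix (Fin d) (Fin d) ℤ)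
    (x : Fin d → ℝ) (ω : ℕ → Fin d → ℤ) : ℕ → Torus d :=
  fun n => torusMk d (tauWord A ω n x)


/-! ### Auxiliary lemmas -/

lemma mem_intLattice {d : ℕ} (x : Fin d → ℝ) :
    x ∈ intLattice d ↔ ∀ i, ∃ k : ℤ, x i = (k : ℝ) := Iff.rfl

lemma castVec_mulVec {d : ℕ} (P : Matrix (Fin d) (Fin d) ℤ) (w : Fin d → ℤ) :
    (toR P).mulVec (fun i => (w i : ℝ)) = fun i => ((P.mulVec w) i : ℝ) := by
  funext i
  simp only [toR, Matrix.mulVec, dotProduct, Matrix.map_apply]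
  push_cast
  rfl

lemma toR_transpose {d : ℕ} (P : Matrix (Fin d) (Fin d) ℤ) : (toR P)ᵀ = toR (Pᵀ) := rfl

lemma eval_charpoly {n : Type*} [Fintype n] [DecidableEq n] {R : Type*} [CommRing R]
    (M : Matrix n n R) (x : R) :
    M.charpoly.eval x = (Matrix.diagonal (fun _ => x) - M).det := by
  have h1 : M.charpoly.eval x = (Polynomial.evalRingHom x) M.charpoly := rfl
  rw [h1, Matrix.charpoly, RingHom.map_det]
  congr 1
  ext i j
  by_cases h : i = j <;>
    simp [h, Matrix.charmatrix_apply, Matrix.diagonal, Matrix.map_apply]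

lemma detC_ne_zero {d : ℕ} (A : Matrix (Fin d) (Fin d) ℤ) (hA : Expansive A) :
    (A.map (Int.cast : ℤ → ℂ)).det ≠ 0 := by
  rw [Matrix.det_eq_prod_roots_charpoly]
  refine Multiset.prod_ne_zero fun h0 => ?_
  have := hA 0 (Polynomial.isRoot_of_mem_roots h0)
  simp at this
  linarith

lemma detA_ne_zero {d : ℕ} (A : Matrix (Fin d) (Fin d) ℤ) (hA : Expansive A) :
    A.det ≠ 0 := by
  intro h
  apply detC_ne_zero A hA
  show ((Int.castRingHom ℂ).mapMatrix A).det = 0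
  rw [← RingHom.map_det]
  simp [h]

lemma detR_ne_zero {d : ℕ} (A : Matrix (Fin d) (Fin d) ℤ) (hA : Expansive A) :
    (toR A).det ≠ 0 := by
  rw [toR]
  have : ((Int.castRingHom ℝ).mapMatrix A).det = ((A.det : ℝ)) := (RingHom.map_det _ _).symm
  rw [show A.map (Int.cast : ℤ → ℝ) = (Int.castRingHom ℝ).mapMatrix A from rfl, this]
  simpa using detA_ne_zero A hA

section NormLemmas

attribute [local instance] Matrix.linftyOpNormedAddCommGroup Matrix.linftyOpNormedRing
  Matrix.linftyOpNormedAlgebra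

lemma nnnorm_map_ofReal {d : ℕ} (Q : Matrix (Fin d) (Fin d) ℝ) :
    ‖Q.map (Complex.ofReal : ℝ → ℂ)‖₊ = ‖Q‖₊ := by
  rw [Matrix.linfty_opNNNorm_def, Matrix.linfty_opNNNorm_def]
  congr 1
  ext i
  congr 1
  ext j
  simp [Matrix.map_apply]

lemma map_ofReal_mul {d : ℕ} (P Q : Matrix (Fin d) (Fin d) ℝ) :
    (P * Q).map (Complex.ofReal : ℝ → ℂ) =
      P.map (Complex.ofReal : ℝ → ℂ) * Q.map (Complex.ofReal : ℝ → ℂ) := by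
  ext i j
  simp [Matrix.mul_apply, Matrix.map_apply]

lemma map_ofReal_pow {d : ℕ} (P : Matrix (Fin d) (Fin d) ℝ) (m : ℕ) :
    (P ^ m).map (Complex.ofReal : ℝ → ℂ) = (P.map (Complex.ofReal : ℝ → ℂ)) ^ m := by
  induction m with
  | zero =>
    ext i j
    simp [Matrix.map_apply, Matrix.one_apply]
    split <;> simp
  | succ t ih => rw [pow_succ, pow_succ, map_ofReal_mul, ih]

lemma mulVec_norm_bound {d : ℕ} (Q : Matrix (Fin d) (Fin d) ℝ) :
    ∃ C : ℝ, 0 ≤ C ∧ ∀ v : Fin d → ℝ, ‖Q.mulVec v‖ ≤ C * ‖v‖ :=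
  ⟨‖Q‖, norm_nonneg _, fun v => Matrix.linfty_opNorm_mulVec _ _⟩

lemma contraction {d : ℕ} (hd : 0 < d) (A : Matrix (Fin d) (Fin d) ℤ) (hA : Expansive A) :
    ∃ (m : ℕ) (c : ℝ), 1 ≤ m ∧ 0 ≤ c ∧ c < 1 ∧
      ∀ v : Fin d → ℝ, ‖(((toR A)ᵀ)⁻¹ ^ m).mulVec v‖ ≤ c * ‖v‖ := by
  haveI : Nonempty (Fin d) := ⟨⟨0, hd⟩⟩
  set Aℂ := A.map (Int.cast : ℤ → ℂ) with hAC
  set N := Aℂᵀ with hN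
  have hdetN : N.det ≠ 0 := by rw [hN, Matrix.det_transpose]; exact detC_ne_zero A hA
  have hNunit : IsUnit N.det := isUnit_iff_ne_zero.mpr hdetN
  set Mc := N⁻¹ with hMc
  have hspec : ∀ μ ∈ spectrum ℂ Mc, ‖μ‖₊ < 1 := by
    intro μ hμ
    have hUnitMc : IsUnit Mc := (Matrix.isUnit_iff_isUnit_det _).mpr
      (isUnit_iff_ne_zero.mpr (by rw [hMc, Matrix.det_nonsing_inv, Ring.inverse_eq_inv]; exact inv_ne_zero hdetN))
    have hμ0 : μ ≠ 0 := by
      rintro rfl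
      rw [spectrum.zero_mem_iff] at hμ
      exact hμ hUnitMc
    have h1 : ¬ IsUnit (μ • (1 : Matrix (Fin d) (Fin d) ℂ) - Mc) := by
      rw [spectrum.mem_iff] at hμ
      simpa [Algebra.algebraMap_eq_smul_one] using hμ
    have hdet0 : (μ • (1 : Matrix (Fin d) (Fin d) ℂ) - Mc).det = 0 := by
      by_contra h
      exact h1 ((Matrix.isUnit_iff_isUnit_det _).mpr (isUnit_iff_ne_zero.mpr h))
    have hfact : μ • (1 : Matrix (Fin d) (Fin d) ℂ) - Mc = (μ • N - 1) * N⁻¹ := by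
      rw [sub_mul, Matrix.smul_mul, Matrix.mul_nonsing_inv _ hNunit, one_mul]
    have hdet1 : (μ • N - 1).det = 0 := by
      have := hdet0
      rw [hfact, Matrix.det_mul] at this
      rcases mul_eq_zero.mp this with h | h
      · exact h
      · exact absurd h (by rw [Matrix.det_nonsing_inv, Ring.inverse_eq_inv]; exact inv_ne_zero hdetN)
    have hfact2 : μ • N - 1 = (-μ) • (μ⁻¹ • (1 : Matrix (Fin d) (Fin d) ℂ) - N) := by
      rw [smul_sub, smul_smul, neg_mul, mul_inv_cancel₀ hμ0, neg_smul, one_smul, neg_smul,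
        sub_neg_eq_add]
      abel
    have hdet2 : (μ⁻¹ • (1 : Matrix (Fin d) (Fin d) ℂ) - N).det = 0 := by
      have := hdet1
      rw [hfact2, Matrix.det_smul] at this
      rcases mul_eq_zero.mp this with h | h
      · exact absurd h (pow_ne_zero _ (neg_ne_zero.mpr hμ0))
      · exact h
    have hdet3 : (μ⁻¹ • (1 : Matrix (Fin d) (Fin d) ℂ) - Aℂ).det = 0 := by
      rw [← Matrix.det_transpose]
      rw [Matrix.transpose_sub, Matrix.transpose_smul, Matrix.transpose_one]
      exact hdet2
    have hroot : (Matrix.charpoly Aℂ).IsRoot μ⁻¹ := by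
      have hdiag : Matrix.diagonal (fun _ : Fin d => μ⁻¹) =
          μ⁻¹ • (1 : Matrix (Fin d) (Fin d) ℂ) := by
        ext i j
        by_cases h : i = j <;> simp [h, Matrix.one_apply, Matrix.diagonal]
      show (Matrix.charpoly Aℂ).eval μ⁻¹ = 0
      rw [_root_.eval_charpoly, hdiag, hdet3]
    have habs := hA μ⁻¹ hroot
    rw [norm_inv] at habs
    have h2 : ‖μ‖ < 1 := by
      by_contra h
      push_neg at h
      have : (‖μ‖)⁻¹ ≤ 1 := inv_le_one_of_one_le₀ h
      linarith
    have : ‖μ‖ < 1 := h2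
    exact_mod_cast this
  haveI : CompleteSpace (Matrix (Fin d) (Fin d) ℂ) := FiniteDimensional.complete ℂ _
  have hrad : spectralRadius ℂ Mc < 1 := by
    have := spectrum.spectralRadius_lt_of_forall_lt Mc (r := 1) hspec
    simpa using this
  have hto := spectrum.pow_nnnorm_pow_one_div_tendsto_nhds_spectralRadius Mc
  have hev : ∀ᶠ n : ℕ in atTop, (‖Mc ^ n‖₊ : ENNReal) ^ (1 / (n : ℝ)) < 1 :=
    hto.eventually_lt_const hrad
  obtain ⟨m, hmlt, hm1⟩ := (hev.and (eventually_ge_atTop 1)).exists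
  have hnn : ‖Mc ^ m‖₊ < 1 := by
    by_contra h
    push_neg at h
    have h1 : (1 : ENNReal) ≤ (‖Mc ^ m‖₊ : ENNReal) := by exact_mod_cast h
    have h2 : (1 : ENNReal) ≤ (‖Mc ^ m‖₊ : ENNReal) ^ (1 / (m : ℝ)) := by
      have := ENNReal.rpow_le_rpow h1 (by positivity : (0:ℝ) ≤ 1 / (m:ℝ))
      rwa [ENNReal.one_rpow] at this
    exact absurd hmlt (not_lt.mpr h2)
  set Br := (toR A)ᵀ with hBr
  have hdetBr : IsUnit Br.det := by
    rw [hBr, Matrix.det_transpose]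
    exact isUnit_iff_ne_zero.mpr (detR_ne_zero A hA)
  have hmapBr : Br.map (Complex.ofReal : ℝ → ℂ) = N := by
    ext i j
    simp [hBr, hN, hAC, toR, Matrix.map_apply]
  have hmapinv : (Br⁻¹).map (Complex.ofReal : ℝ → ℂ) = Mc := by
    rw [hMc, ← hmapBr]
    symm
    apply Matrix.inv_eq_left_inv
    rw [← map_ofReal_mul, Matrix.nonsing_inv_mul _ hdetBr]
    ext i j
    simp [Matrix.map_apply, Matrix.one_apply]
    split <;> simp
  have hpowmap : (Br⁻¹ ^ m).map (Complex.ofReal : ℝ → ℂ) = Mc ^ m := by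
    rw [← hmapinv, map_ofReal_pow]
  have hnormeq : ‖Br⁻¹ ^ m‖₊ = ‖Mc ^ m‖₊ := by
    rw [← hpowmap, nnnorm_map_ofReal]
  refine ⟨m, ‖Br⁻¹ ^ m‖, hm1, norm_nonneg _, ?_, ?_⟩
  · have : ‖Br⁻¹ ^ m‖₊ < 1 := hnormeq ▸ hnn
    exact_mod_cast this
  · intro v
    exact Matrix.linfty_opNorm_mulVec _ _

end NormLemmas

/-- encoding of an integer translate: for every k ∈ ℤ^d and
j ∈ ℤ/pℤ there is a unique digit string ω with
τ_{ω_{n−1}}⋯τ_{ω_0}(x) ≡ (Aᵀ)^{−n}(x + k − θ_j) + θ_{j+n}  mod ℤ^d for all x, n;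
its digits are given by the generalized Euclidean algorithm via R_C, and ω is
eventually periodic. -/
theorem statement17 (d : ℕ) (hd : 0 < d) (A : Matrix (Fin d) (Fin d) ℤ)
    (hA : Expansive A) (D : Set (Fin d → ℤ)) (hD : CompleteDigits A D)
    (p : ℕ) (hp : 0 < p) (θ : ZMod p → Fin d → ℝ) (l : ZMod p → Fin d → ℤ)
    (hl : ∀ j, l j ∈ D)
    (hcyc : ∀ j : ZMod p,
      (toR A)ᵀ.mulVec (θ (j + 1)) = θ j + fun i => (l j i : ℝ))
    (hsimple : ∀ j j' : ZMod p, j ≠ j' → (θ j - θ j') ∉ intLattice d)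
    (R : (Fin d → ℤ) × ZMod p → (Fin d → ℤ) × ZMod p)
    (hR : ∀ (a : Fin d → ℤ) (j : ZMod p), (R (a, j)).2 = j + 1 ∧
      ∃ d₀ ∈ D, (fun i => (a i : ℝ)) - θ j =
        (toR A)ᵀ.mulVec ((fun i => ((R (a, j)).1 i : ℝ)) - θ (j + 1)) +
          fun i => (d₀ i : ℝ))
    (k : Fin d → ℤ) (j : ZMod p) :
    ∃ ω : ℕ → Fin d → ℤ,
      (∀ n, ω n ∈ D) ∧
      (∀ (x : Fin d → ℝ) (n : ℕ),
        (tauWord A ω n x -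
          ((((toR A)ᵀ)⁻¹) ^ n).mulVec (x + (fun i => (k i : ℝ)) - θ j) -
          θ (j + (n : ZMod p))) ∈ intLattice d) ∧
      (∀ ω' : ℕ → Fin d → ℤ, (∀ n, ω' n ∈ D) →
        (∀ (x : Fin d → ℝ) (n : ℕ),
          (tauWord A ω' n x -
            ((((toR A)ᵀ)⁻¹) ^ n).mulVec (x + (fun i => (k i : ℝ)) - θ j) -
            θ (j + (n : ZMod p))) ∈ intLattice d) → ω' = ω) ∧
      (∀ n : ℕ, (fun i => (ω n i : ℝ)) =
        ((fun i => (((R^[n] (k, j)).1) i : ℝ)) - θ (j + (n : ZMod p))) -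
          (toR A)ᵀ.mulVec
            ((fun i => (((R^[n + 1] (k, j)).1) i : ℝ)) - θ (j + ((n + 1 : ℕ) : ZMod p)))) ∧
      (∃ N q : ℕ, 1 ≤ q ∧ ∀ n, N ≤ n → ω (n + q) = ω n) := by
  classical
  have hdetB : IsUnit ((toR A)ᵀ).det := by
    rw [Matrix.det_transpose]
    exact isUnit_iff_ne_zero.mpr (detR_ne_zero A hA)
  set B := (toR A)ᵀ with hB
  set M := B⁻¹ with hM
  have hMdef : M = ((toR A)ᵀ)⁻¹ := by rw [hM, hB]
  have hMB : M * B = 1 := Matrix.nonsing_inv_mul _ hdetB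
  have hBM : B * M = 1 := Matrix.mul_nonsing_inv _ hdetB
  have htau : ∀ (v : Fin d → ℤ) (y : Fin d → ℝ),
      tauD A v y = M.mulVec (y + fun i => (v i : ℝ)) := by
    intro v y
    rw [hMdef]
    rfl
  -- the state sequence
  set s : ℕ → (Fin d → ℤ) × ZMod p := fun n => R^[n] (k, j) with hs
  have hs0 : s 0 = (k, j) := rfl
  have hsucc : ∀ n, s (n + 1) = R (s n) := fun n => Function.iterate_succ_apply' R n (k, j)
  have hR2 : ∀ st : (Fin d → ℤ) × ZMod p, (R st).2 = st.2 + 1 := by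
    intro st
    have := (hR st.1 st.2).1
    rwa [Prod.mk.eta] at this
  have hRex : ∀ st : (Fin d → ℤ) × ZMod p, ∃ d₀, d₀ ∈ D ∧
      ((fun i => (st.1 i : ℝ)) - θ st.2 =
        B.mulVec ((fun i => ((R st).1 i : ℝ)) - θ (st.2 + 1)) + fun i => (d₀ i : ℝ)) := by
    intro st
    obtain ⟨d₀, hd₀, he⟩ := (hR st.1 st.2).2
    rw [Prod.mk.eta] at he
    exact ⟨d₀, hd₀, he⟩
  -- the digit function
  set g : (Fin d → ℤ) × ZMod p → (Fin d → ℤ) := fun st => (hRex st).choose with hg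
  have hgD : ∀ st, g st ∈ D := fun st => (hRex st).choose_spec.1
  have hgeq : ∀ st, (fun i => (st.1 i : ℝ)) - θ st.2 =
      B.mulVec ((fun i => ((R st).1 i : ℝ)) - θ (st.2 + 1)) + fun i => (g st i : ℝ) :=
    fun st => (hRex st).choose_spec.2
  set ω : ℕ → Fin d → ℤ := fun n => g (s n) with hωdef
  have hωD : ∀ n, ω n ∈ D := fun n => hgD (s n)
  have hsnd : ∀ n, (s n).2 = j + (n : ZMod p) := by
    intro n
    induction n with
    | zero => simp [hs0]
    | succ t ih =>
      rw [hsucc, hR2, ih]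
      push_cast
      ring
  have hEn : ∀ n, (fun i => ((s n).1 i : ℝ)) - θ ((s n).2) =
      B.mulVec ((fun i => ((s (n+1)).1 i : ℝ)) - θ ((s n).2 + 1)) + fun i => (ω n i : ℝ) := by
    intro n
    have := hgeq (s n)
    rwa [← hsucc] at this
  have hsnd' : ∀ n, (s n).2 + 1 = j + ((n + 1 : ℕ) : ZMod p) := by
    intro n
    rw [hsnd]
    push_cast
    ring
  have hEnj : ∀ n, (fun i => ((s n).1 i : ℝ)) - θ (j + (n : ZMod p)) =
      B.mulVec ((fun i => ((s (n+1)).1 i : ℝ)) - θ (j + ((n + 1 : ℕ) : ZMod p)))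
        + fun i => (ω n i : ℝ) := by
    intro n
    have h := hEn n
    rw [hsnd' n] at h
    rwa [hsnd n] at h
  -- the key exact identity
  have key : ∀ (x : Fin d → ℝ) (n : ℕ), tauWord A ω n x =
      (M ^ n).mulVec (x + (fun i => (k i : ℝ)) - θ j) + θ (j + (n : ZMod p))
        - fun i => ((s n).1 i : ℝ) := by
    intro x n
    induction n with
    | zero =>
      show x = _
      simp only [hs0, pow_zero, Matrix.one_mulVec, Nat.cast_zero, add_zero]
      abel
    | succ t ih =>
      show tauD A (ω t) (tauWord A ω t x) = _
      rw [htau, ih]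
      have harr : ((M ^ t).mulVec (x + (fun i => (k i : ℝ)) - θ j) + θ (j + (t : ZMod p))
            - (fun i => ((s t).1 i : ℝ))) + (fun i => (ω t i : ℝ))
          = (M ^ t).mulVec (x + (fun i => (k i : ℝ)) - θ j)
            - B.mulVec ((fun i => ((s (t+1)).1 i : ℝ)) - θ (j + ((t + 1 : ℕ) : ZMod p))) := by
        have h := hEnj t
        linear_combination -h
      rw [harr, Matrix.mulVec_sub, Matrix.mulVec_mulVec, Matrix.mulVec_mulVec, ← pow_succ',
        hMB, Matrix.one_mulVec]
      push_cast
      abel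
  -- property (2): lattice membership
  have prop2 : ∀ (x : Fin d → ℝ) (n : ℕ),
      (tauWord A ω n x - (M ^ n).mulVec (x + (fun i => (k i : ℝ)) - θ j)
        - θ (j + (n : ZMod p))) ∈ intLattice d := by
    intro x n
    have he : tauWord A ω n x - (M ^ n).mulVec (x + (fun i => (k i : ℝ)) - θ j)
        - θ (j + (n : ZMod p)) = -(fun i => ((s n).1 i : ℝ)) := by
      rw [key x n]
      abel
    rw [mem_intLattice, he]
    intro i
    exact ⟨-((s n).1 i), by simp⟩
  -- congruence of tauWord in the digits
  have tauWord_congr : ∀ (ω₁ ω₂ : ℕ → Fin d → ℤ) (n : ℕ),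
      (∀ i, i < n → ω₁ i = ω₂ i) → ∀ x, tauWord A ω₁ n x = tauWord A ω₂ n x := by
    intro ω₁ ω₂ n
    induction n with
    | zero => intro _ _; rfl
    | succ t ih =>
      intro h x
      show tauD A (ω₁ t) (tauWord A ω₁ t x) = tauD A (ω₂ t) (tauWord A ω₂ t x)
      rw [ih (fun i hi => h i (Nat.lt_succ_of_lt hi)) x, h t (Nat.lt_succ_self t)]
  -- uniqueness
  have uniq : ∀ ω' : ℕ → Fin d → ℤ, (∀ n, ω' n ∈ D) →
      (∀ (x : Fin d → ℝ) (n : ℕ),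
        (tauWord A ω' n x - (M ^ n).mulVec (x + (fun i => (k i : ℝ)) - θ j)
          - θ (j + (n : ZMod p))) ∈ intLattice d) → ω' = ω := by
    intro ω' hω'D hω'p
    funext n
    induction n using Nat.strong_induction_on with
    | _ n ih =>
    have h1 := hω'p 0 (n + 1)
    have h2 := prop2 0 (n + 1)
    have h3 := (intLattice d).sub_mem h1 h2
    have he : (tauWord A ω' (n+1) 0 - (M ^ (n+1)).mulVec (0 + (fun i => (k i : ℝ)) - θ j)
          - θ (j + ((n+1 : ℕ) : ZMod p)))
        - (tauWord A ω (n+1) 0 - (M ^ (n+1)).mulVec (0 + (fun i => (k i : ℝ)) - θ j)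
          - θ (j + ((n+1 : ℕ) : ZMod p)))
        = tauWord A ω' (n+1) 0 - tauWord A ω (n+1) 0 := by abel
    rw [he] at h3
    have hto : tauWord A ω' (n+1) 0 - tauWord A ω (n+1) 0
        = M.mulVec ((fun i => (ω' n i : ℝ)) - fun i => (ω n i : ℝ)) := by
      show tauD A (ω' n) (tauWord A ω' n 0) - tauD A (ω n) (tauWord A ω n 0) = _
      rw [tauWord_congr ω' ω n (fun i hi => ih i hi) 0, htau, htau, ← Matrix.mulVec_sub]
      congr 1
      abel
    rw [hto, mem_intLattice] at h3
    choose w hw using h3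
    have hcast : (fun i => (ω' n i : ℝ)) - (fun i => (ω n i : ℝ))
        = B.mulVec (fun i => (w i : ℝ)) := by
      have h4 : B.mulVec (M.mulVec ((fun i => (ω' n i : ℝ)) - fun i => (ω n i : ℝ)))
          = (fun i => (ω' n i : ℝ)) - fun i => (ω n i : ℝ) := by
        rw [Matrix.mulVec_mulVec, hBM, Matrix.one_mulVec]
      have h5 : M.mulVec ((fun i => (ω' n i : ℝ)) - fun i => (ω n i : ℝ))
          = fun i => (w i : ℝ) := funext hw
      rw [← h4, h5]
    have hint : ω' n - ω n = Aᵀ.mulVec w := by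
      rw [hB, toR_transpose, castVec_mulVec] at hcast
      funext i
      have hi := congrFun hcast i
      simp only [Pi.sub_apply] at hi ⊢
      exact_mod_cast hi
    obtain ⟨v, hv, hvuniq⟩ := hD (ω' n)
    have e1 : ω' n = v := hvuniq _ ⟨hω'D n, 0, by simp⟩
    have e2 : ω n = v := hvuniq _ ⟨hωD n, w, hint⟩
    rw [e1, e2]
  -- property (4): digit formula
  have prop4 : ∀ n : ℕ, (fun i => (ω n i : ℝ)) =
      ((fun i => ((s n).1 i : ℝ)) - θ (j + (n : ZMod p))) -
        B.mulVec ((fun i => ((s (n+1)).1 i : ℝ)) - θ (j + ((n + 1 : ℕ) : ZMod p))) := by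
    intro n
    have h := hEnj n
    linear_combination -h
  -- boundedness and eventual periodicity
  -- D is finite
  have hdetAt : Aᵀ.det ≠ 0 := by
    rw [Matrix.det_transpose]
    exact detA_ne_zero A hA
  have hDfin : D.Finite := by
    set Nd : ℕ := (Aᵀ.det).natAbs with hNd
    haveI : NeZero Nd := ⟨Int.natAbs_ne_zero.mpr hdetAt⟩
    have hinj : Set.InjOn (fun v : Fin d → ℤ => (fun i => ((v i : ZMod Nd)))) D := by
      intro v hv v' hv' hvv
      have hdvd : ∀ i, ((Nd : ℤ)) ∣ (v i - v' i) := by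
        intro i
        have h5 := congrFun hvv i
        rw [ZMod.intCast_eq_intCast_iff] at h5
        exact (Int.ModEq.dvd h5.symm)
      choose w hw using hdvd
      have hvw : v - v' = (Nd : ℤ) • w := by
        funext i
        simp only [Pi.sub_apply, Pi.smul_apply, smul_eq_mul]
        exact hw i
      have hadj : ∀ u : Fin d → ℤ, Aᵀ.mulVec ((Aᵀ.adjugate).mulVec u) = Aᵀ.det • u := by
        intro u
        rw [Matrix.mulVec_mulVec, Matrix.mul_adjugate, Matrix.smul_mulVec,
          Matrix.one_mulVec]
      have hex : ∃ y : Fin d → ℤ, v - v' = Aᵀ.mulVec y := by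
        rcases Int.natAbs_eq (Aᵀ.det) with hε | hε
        · exact ⟨(Aᵀ.adjugate).mulVec w, by rw [hadj, hvw, ← hε]⟩
        · refine ⟨-((Aᵀ.adjugate).mulVec w), ?_⟩
          rw [Matrix.mulVec_neg, hadj, hvw, hε]
          funext i
          simp only [Pi.neg_apply, Pi.smul_apply, smul_eq_mul]
          ring
      obtain ⟨z, hz, hzuniq⟩ := hD v
      have e1 : v = z := hzuniq _ ⟨hv, 0, by simp⟩
      have e2 : v' = z := hzuniq _ ⟨hv', hex.choose, hex.choose_spec⟩
      rw [e1, e2]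
    exact Set.Finite.of_finite_image (Set.toFinite _) hinj
  -- a bound on the digits
  obtain ⟨Kd, hKd0, hKd⟩ : ∃ K : ℝ, 0 ≤ K ∧
      ∀ v ∈ D, ‖(fun i => (v i : ℝ) : Fin d → ℝ)‖ ≤ K := by
    obtain ⟨K, hK⟩ := (hDfin.image (fun v : Fin d → ℤ =>
      ‖(fun i => (v i : ℝ) : Fin d → ℝ)‖)).bddAbove
    exact ⟨max K 0, le_max_right _ _,
      fun v hv => le_trans (hK (Set.mem_image_of_mem _ hv)) (le_max_left _ _)⟩
  -- one-step norm bound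
  obtain ⟨CM, hCM0, hCM⟩ := mulVec_norm_bound M
  -- contraction after m steps
  obtain ⟨m, c, hm1, hc0, hc1, hcontr'⟩ := contraction hd A hA
  have hcontr : ∀ v : Fin d → ℝ, ‖(M ^ m).mulVec v‖ ≤ c * ‖v‖ := by
    intro v
    rw [hMdef]
    exact hcontr' v
  -- the recentered sequence
  set u : ℕ → Fin d → ℝ := fun n => (fun i => ((s n).1 i : ℝ)) - θ ((s n).2) with hu
  have hueq : ∀ n, u n = (fun i => ((s n).1 i : ℝ)) - θ ((s n).2) := fun n => rfl
  have hustep : ∀ n, u (n + 1) = M.mulVec (u n - fun i => (ω n i : ℝ)) := by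
    intro n
    have h := hEn n
    have h2 : u n - (fun i => (ω n i : ℝ)) = B.mulVec (u (n+1)) := by
      rw [hueq n, hueq (n+1)]
      rw [show (s (n+1)).2 = (s n).2 + 1 by rw [hsucc, hR2]]
      linear_combination h
    rw [h2, Matrix.mulVec_mulVec, hMB, Matrix.one_mulVec]
  -- error accumulation
  set E : ℕ → ℝ := fun t => Nat.rec (motive := fun _ => ℝ) 0 (fun _ Et => CM * (Et + Kd)) t
    with hE
  have hE0 : E 0 = 0 := rfl
  have hEsucc : ∀ t, E (t + 1) = CM * (E t + Kd) := fun t => rfl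
  have hEnn : ∀ t, 0 ≤ E t := by
    intro t
    induction t with
    | zero => rw [hE0]
    | succ r ih =>
      rw [hEsucc]
      have : 0 ≤ E r + Kd := by linarith
      positivity
  have hiter : ∀ t n, ∃ e : Fin d → ℝ, u (n + t) = (M ^ t).mulVec (u n) + e ∧ ‖e‖ ≤ E t := by
    intro t
    induction t with
    | zero =>
      intro n
      refine ⟨0, ?_, by rw [hE0, norm_zero]⟩
      simp [pow_zero, Matrix.one_mulVec]
    | succ t ih =>
      intro n
      obtain ⟨e, he, hbnd⟩ := ih n
      refine ⟨M.mulVec (e - fun i => (ω (n + t) i : ℝ)), ?_, ?_⟩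
      · have hnt : n + (t + 1) = (n + t) + 1 := rfl
        rw [hnt, hustep (n + t), he]
        have harr2 : (M ^ t).mulVec (u n) + e - (fun i => (ω (n + t) i : ℝ))
            = (M ^ t).mulVec (u n) + (e - fun i => (ω (n + t) i : ℝ)) := by abel
        rw [harr2, Matrix.mulVec_add, Matrix.mulVec_mulVec, ← pow_succ']
      · have hb1 : ‖e - fun i => (ω (n + t) i : ℝ)‖
            ≤ E t + Kd := by
          calc ‖e - fun i => (ω (n + t) i : ℝ)‖
              ≤ ‖e‖ + ‖(fun i => (ω (n + t) i : ℝ) : Fin d → ℝ)‖ := norm_sub_le _ _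
            _ ≤ E t + Kd := add_le_add hbnd (hKd _ (hωD _))
        calc ‖M.mulVec (e - fun i => (ω (n + t) i : ℝ))‖
            ≤ CM * ‖e - fun i => (ω (n + t) i : ℝ)‖ := hCM _
          _ ≤ CM * (E t + Kd) := by
              apply mul_le_mul_of_nonneg_left hb1 hCM0
          _ = E (t + 1) := (hEsucc t).symm
  -- global bound
  have hm0 : 0 < m := hm1
  have hrangene : (Finset.range m).Nonempty := ⟨0, Finset.mem_range.mpr hm0⟩
  set L0 : ℝ := (Finset.range m).sup' hrangene (fun r => ‖u r‖) with hL0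
  have h1c : (0:ℝ) < 1 - c := by linarith
  set L : ℝ := max L0 0 + E m / (1 - c) with hL
  have hEm1c : 0 ≤ E m / (1 - c) := div_nonneg (hEnn m) (le_of_lt h1c)
  have hbound : ∀ n, ‖u n‖ ≤ L := by
    intro n
    induction n using Nat.strong_induction_on with
    | _ n ih =>
    by_cases hnm : n < m
    · have : ‖u n‖ ≤ L0 := by
        rw [hL0]
        exact Finset.le_sup' (fun r => ‖u r‖) (Finset.mem_range.mpr hnm)
      calc ‖u n‖ ≤ L0 := this
        _ ≤ max L0 0 := le_max_left _ _
        _ ≤ L := by rw [hL]; linarith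
    · push_neg at hnm
      obtain ⟨e, he, hbnd⟩ := hiter m (n - m)
      have hnn : (n - m) + m = n := by omega
      rw [hnn] at he
      have hihm : ‖u (n - m)‖ ≤ L := ih (n - m) (by omega)
      have hster : ‖u n‖ ≤ c * ‖u (n - m)‖ + E m := by
        rw [he]
        calc ‖(M ^ m).mulVec (u (n - m)) + e‖
            ≤ ‖(M ^ m).mulVec (u (n - m))‖ + ‖e‖ := norm_add_le _ _
          _ ≤ c * ‖u (n - m)‖ + E m := add_le_add (hcontr _) hbnd
      have hdiv : E m / (1 - c) * (1 - c) = E m := div_mul_cancel₀ _ (ne_of_gt h1c)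
      have hmaxnn : (0:ℝ) ≤ max L0 0 := le_max_right _ _
      have hcL : c * L + E m ≤ L := by
        rw [hL]
        nlinarith
      calc ‖u n‖ ≤ c * ‖u (n - m)‖ + E m := hster
        _ ≤ c * L + E m := by nlinarith
        _ ≤ L := hcL
  -- bound on θ
  haveI : NeZero p := ⟨hp.ne'⟩
  obtain ⟨T, hT⟩ : ∃ T : ℝ, ∀ i : ZMod p, ‖θ i‖ ≤ T := by
    obtain ⟨T, hT⟩ := (Set.finite_range (fun i : ZMod p => ‖θ i‖)).bddAbove
    exact ⟨T, fun i => hT ⟨i, rfl⟩⟩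
  -- the integer points are confined
  set C : ℤ := ⌈L + T⌉ with hC
  have hconf : ∀ n, s n ∈ (Set.Icc (fun _ => -C) (fun _ => C) : Set (Fin d → ℤ)) ×ˢ
      (Set.univ : Set (ZMod p)) := by
    intro n
    refine ⟨?_, Set.mem_univ _⟩
    have hcasteq : (fun i => ((s n).1 i : ℝ)) = u n + θ ((s n).2) := by
      rw [hueq n]
      abel
    have hnorm : ‖(fun i => ((s n).1 i : ℝ) : Fin d → ℝ)‖ ≤ L + T := by
      rw [hcasteq]
      calc ‖u n + θ ((s n).2)‖ ≤ ‖u n‖ + ‖θ ((s n).2)‖ := norm_add_le _ _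
        _ ≤ L + T := add_le_add (hbound n) (hT _)
    rw [Set.mem_Icc]
    constructor <;> intro i
    all_goals {
      have hcoord : |((s n).1 i : ℝ)| ≤ L + T := by
        have := norm_le_pi_norm (fun i => ((s n).1 i : ℝ) : Fin d → ℝ) i
        rw [Real.norm_eq_abs] at this
        exact le_trans this hnorm
      have hC' : |((s n).1 i : ℝ)| ≤ (C : ℝ) := le_trans hcoord (Int.le_ceil _)
      have hCint : |(s n).1 i| ≤ C := by
        have := hC'
        rw [← Int.cast_abs] at this
        exact_mod_cast this
      have := abs_le.mp hCint
      first
      | exact this.1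
      | exact this.2
    }
  -- pigeonhole
  haveI hfinT : Finite ↥((Set.Icc (fun _ => -C) (fun _ => C) : Set (Fin d → ℤ)) ×ˢ
      (Set.univ : Set (ZMod p))) :=
    ((Set.finite_Icc _ _).prod Set.finite_univ).to_subtype
  obtain ⟨n₁, n₂, hne, heq⟩ := Finite.exists_ne_map_eq_of_infinite
    (fun n : ℕ => (⟨s n, hconf n⟩ : ↥((Set.Icc (fun _ => -C) (fun _ => C) :
      Set (Fin d → ℤ)) ×ˢ (Set.univ : Set (ZMod p)))))
  have hseq : s n₁ = s n₂ := by
    have := congrArg Subtype.val heq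
    exact this
  obtain ⟨N, q, hq1, hNq⟩ : ∃ N q : ℕ, 1 ≤ q ∧ s (N + q) = s N := by
    rcases hne.lt_or_gt with h | h
    · exact ⟨n₁, n₂ - n₁, by omega, by rw [show n₁ + (n₂ - n₁) = n₂ by omega]; exact hseq.symm⟩
    · exact ⟨n₂, n₁ - n₂, by omega, by rw [show n₂ + (n₁ - n₂) = n₁ by omega]; exact hseq⟩
  have hper : ∀ n, N ≤ n → s (n + q) = s n := by
    intro n hn
    induction n, hn using Nat.le_induction with
    | base => exact hNq
    | succ n hn ih =>
      have h6 : n + 1 + q = (n + q) + 1 := by omega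
      rw [h6, hsucc, ih, ← hsucc]
  refine ⟨ω, hωD, prop2, uniq, prop4, ⟨N, q, hq1, ?_⟩⟩
  intro n hn
  show g (s (n + q)) = g (s n)
  rw [hper n hn]
end

section
/- Let C = (θ_j, l_j)_{j∈ℤ/pℤ} be a simple cycle of length p for (τ_d)_{d∈D}. Let n ∈ ℕ, let ω_0, …, ω_{np−1} ∈ D, let q ≥ 1 and m_0, …, m_{q−1} ∈ D, and let ω ∈ D^ℕ be the word ω_0…ω_{np−1} followed by the infinite repetition of m_0…m_{q−1}. Let η₀ ∈ ℝ^d be the unique fixed point of τ_{m_{q−1}}∘⋯∘τ_{m_0} (which exists since A is expansive), and assume η₀ − θ_{j'} ∈ −ℤ^d for some (necessarily unique, by simplicity) j' ∈ ℤ/pℤ, i.e., η₀ ∈ θ_{j'} − ℤ^d. Then there is a unique pair (k, j) ∈ ℤ^d × ℤ/pℤ such that for all x ∈ ℝ^d and all n' ∈ ℕ: τ_{ω_{n'−1}}∘⋯∘τ_{ω_0}(x) − (A^T)^{−n'}(x + k − θ_j) − θ_{j+n'} ∈ ℤ^d. Moreover j = j' and k = ∑_{i=0}^{np−1} (A^T)^i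 ω_i + θ_{j'} − (A^T)^{np} η₀. -/
open Matrix MeasureTheory Filter Topology

section St18Aux

open Polynomial Filter Topology
open scoped ENNReal NNReal

variable {d : ℕ}

lemma st18_intLattice_cast (v : Fin d → ℤ) : (fun i => (v i : ℝ)) ∈ intLattice d :=
  fun i => ⟨v i, rfl⟩

lemma st18_intLattice_mulVec (M : Matrix (Fin d) (Fin d) ℤ) {x : Fin d → ℝ}
    (hx : x ∈ intLattice d) : (toR M).mulVec x ∈ intLattice d :=
  latticeMap_aux M hx

lemma st18_toR_transpose (A : Matrix (Fin d) (Fin d) ℤ) : (toR A)ᵀ = toR Aᵀ := by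
  ext i j; simp [toR]

lemma st18_intLattice_T_pow (A : Matrix (Fin d) (Fin d) ℤ) (n : ℕ) :
    ∀ x ∈ intLattice d, (((toR A)ᵀ) ^ n).mulVec x ∈ intLattice d := by
  induction n with
  | zero => intro x hx; simpa [Matrix.one_mulVec] using hx
  | succ n ih =>
    intro x hx
    rw [pow_succ, ← Matrix.mulVec_mulVec]
    refine ih _ ?_
    rw [st18_toR_transpose]
    exact st18_intLattice_mulVec Aᵀ hx

lemma st18_tauWord_zero (A : Matrix (Fin d) (Fin d) ℤ) (ω : ℕ → Fin d → ℤ) (x : Fin d → ℝ) :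
    tauWord A ω 0 x = x := rfl

lemma st18_tauWord_succ (A : Matrix (Fin d) (Fin d) ℤ) (ω : ℕ → Fin d → ℤ) (n : ℕ)
    (x : Fin d → ℝ) : tauWord A ω (n + 1) x = tauD A (ω n) (tauWord A ω n x) := rfl

lemma st18_tauWord_congr (A : Matrix (Fin d) (Fin d) ℤ) (ω₁ ω₂ : ℕ → Fin d → ℤ)
    (x : Fin d → ℝ) (n : ℕ) (h : ∀ i, i < n → ω₁ i = ω₂ i) :
    tauWord A ω₁ n x = tauWord A ω₂ n x := by
  induction n with
  | zero => rfl
  | succ n ih =>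
    rw [st18_tauWord_succ, st18_tauWord_succ, h n (Nat.lt_succ_self n),
      ih (fun i hi => h i (Nat.lt_succ_of_lt hi))]

lemma st18_tauWord_shift (A : Matrix (Fin d) (Fin d) ℤ) (ω : ℕ → Fin d → ℤ)
    (x : Fin d → ℝ) (a b : ℕ) :
    tauWord A ω (a + b) x = tauWord A (fun i => ω (i + a)) b (tauWord A ω a x) := by
  induction b with
  | zero => rfl
  | succ b ih =>
    show tauD A (ω (a + b)) (tauWord A ω (a + b) x) = _
    rw [st18_tauWord_succ, ih, Nat.add_comm a b]

lemma st18_charpoly_eval (M : Matrix (Fin d) (Fin d) ℂ) (μ : ℂ) :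
    M.charpoly.eval μ = (μ • (1 : Matrix (Fin d) (Fin d) ℂ) - M).det := by
  rw [Matrix.charpoly, _root_.eval_det, Matrix.matPolyEquiv_charmatrix]
  rw [eval_sub, eval_X, eval_C]
  congr 1
  rw [Matrix.scalar_apply, Matrix.smul_one_eq_diagonal]

lemma st18_expansive_det_ne_zero (A : Matrix (Fin d) (Fin d) ℤ) (hA : Expansive A) :
    A.det ≠ 0 := by
  intro h
  have hdet : (A.map (Int.cast : ℤ → ℂ)).det = 0 := by
    rw [show (A.map (Int.cast : ℤ → ℂ)) = (Int.castRingHom ℂ).mapMatrix A from rfl,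
      ← RingHom.map_det]
    simp [h]
  have h0 : (A.map (Int.cast : ℤ → ℂ)).charpoly.IsRoot 0 := by
    rw [Polynomial.IsRoot, ← Polynomial.coeff_zero_eq_eval_zero]
    have h2 := (Matrix.det_eq_sign_charpoly_coeff (A.map (Int.cast : ℤ → ℂ))).symm
    rw [hdet] at h2
    rcases Nat.even_or_odd (Fintype.card (Fin d)) with he | ho
    · rw [he.neg_one_pow] at h2; simpa using h2
    · rw [ho.neg_one_pow] at h2; simpa using h2
  have := hA 0 h0
  simp only [norm_zero] at this
  linarith

lemma st18_spec_bound (A : Matrix (Fin d) (Fin d) ℤ) (hA : Expansive A) :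
    ∀ μ ∈ spectrum ℂ (((A.map (Int.cast : ℤ → ℂ))ᵀ)⁻¹), ‖μ‖₊ < 1 := by
  intro μ hμ
  rcases eq_or_ne μ 0 with rfl | hμ0
  · simp
  set Ac := A.map (Int.cast : ℤ → ℂ) with hAc
  have hdetAc : Ac.det ≠ 0 := by
    rw [show Ac = (Int.castRingHom ℂ).mapMatrix A from rfl, ← RingHom.map_det]
    simpa using st18_expansive_det_ne_zero A hA
  have hdet : IsUnit (Acᵀ).det := by
    rw [Matrix.det_transpose]; exact isUnit_iff_ne_zero.mpr hdetAc
  have hu : IsUnit (Acᵀ) := (Matrix.isUnit_iff_isUnit_det _).mpr hdet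
  have hcoe : (↑hu.unit⁻¹ : Matrix (Fin d) (Fin d) ℂ) = (Acᵀ)⁻¹ := by
    rw [Matrix.coe_units_inv, hu.unit_spec]
  have hμmem : ((Units.mk0 μ hμ0 : ℂˣ) : ℂ) ∈
      spectrum ℂ ((↑hu.unit⁻¹ : Matrix (Fin d) (Fin d) ℂ)) := by
    rw [hcoe]; exact hμ
  have hinv : ((Units.mk0 μ hμ0)⁻¹ : ℂˣ).val ∈
      spectrum ℂ ((hu.unit : Matrix (Fin d) (Fin d) ℂ)) := by
    rw [show (hu.unit : Matrix (Fin d) (Fin d) ℂ) = ((hu.unit⁻¹)⁻¹ : _ˣ) from by simp]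
    exact spectrum.inv_mem_iff.mp hμmem
  rw [hu.unit_spec] at hinv
  have hnu : ¬ IsUnit (algebraMap ℂ (Matrix (Fin d) (Fin d) ℂ) μ⁻¹ - Acᵀ) := by
    have := spectrum.mem_iff.mp hinv
    simpa using this
  have hdz : (μ⁻¹ • (1 : Matrix (Fin d) (Fin d) ℂ) - Acᵀ).det = 0 := by
    by_contra hne
    exact hnu (by
      rw [Algebra.algebraMap_eq_smul_one]
      exact (Matrix.isUnit_iff_isUnit_det _).mpr (isUnit_iff_ne_zero.mpr hne))
  have hroot : Ac.charpoly.IsRoot μ⁻¹ := by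
    rw [Polynomial.IsRoot, st18_charpoly_eval]
    rw [← Matrix.det_transpose]
    convert hdz using 2
    rw [Matrix.transpose_sub, Matrix.transpose_smul, Matrix.transpose_one]
  have h1 : 1 < ‖μ⁻¹‖ := hA μ⁻¹ hroot
  rw [norm_inv] at h1
  have h0 : 0 < ‖μ‖ := norm_pos_iff.mpr hμ0
  have hlt : ‖μ‖ < 1 := by
    by_contra hge
    push_neg at hge
    have : (‖μ‖)⁻¹ ≤ 1 := by
      rw [inv_le_one_iff₀]; right; exact hge
    linarith
  rw [← NNReal.coe_lt_coe]
  simpa using hlt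

lemma st18_map_ofReal_toR (A : Matrix (Fin d) (Fin d) ℤ) :
    ((toR A)ᵀ).map (Complex.ofReal) = (A.map (Int.cast : ℤ → ℂ))ᵀ := by
  ext i j
  simp [toR, Matrix.map_apply, Matrix.transpose_apply]

lemma st18_map_inv_ofReal (M : Matrix (Fin d) (Fin d) ℝ) (h : IsUnit M.det) :
    (M⁻¹).map (Complex.ofReal) = (M.map (Complex.ofReal))⁻¹ := by
  symm
  apply Matrix.inv_eq_right_inv
  rw [show M.map (Complex.ofReal : ℝ → ℂ) = (Complex.ofRealHom).mapMatrix M from rfl,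
    show (M⁻¹).map (Complex.ofReal : ℝ → ℂ) = (Complex.ofRealHom).mapMatrix M⁻¹ from rfl,
    ← _root_.map_mul, Matrix.mul_nonsing_inv M h, _root_.map_one]

lemma st18_map_pow_ofReal (M : Matrix (Fin d) (Fin d) ℝ) (n : ℕ) :
    (M ^ n).map (Complex.ofReal) = (M.map (Complex.ofReal)) ^ n := by
  rw [show M.map (Complex.ofReal : ℝ → ℂ) = (Complex.ofRealHom).mapMatrix M from rfl,
    show (M ^ n).map (Complex.ofReal : ℝ → ℂ) = (Complex.ofRealHom).mapMatrix (M ^ n) from rfl,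
    _root_.map_pow]

lemma st18_mulVec_cast (M : Matrix (Fin d) (Fin d) ℝ) (v : Fin d → ℝ) (i : Fin d) :
    ((M.mulVec v i : ℝ) : ℂ) = (M.map Complex.ofReal).mulVec (fun j => (v j : ℂ)) i := by
  simp only [Matrix.mulVec, dotProduct, Matrix.map_apply]
  push_cast
  rfl

section St18Norm

attribute [local instance] Matrix.linftyOpNormedRing Matrix.linftyOpNormedAlgebra

lemma st18_toR_det_isUnit (A : Matrix (Fin d) (Fin d) ℤ) (hA : Expansive A) :
    IsUnit ((toR A)ᵀ).det := by
  rw [Matrix.det_transpose]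
  rw [show toR A = (Int.castRingHom ℝ).mapMatrix A from rfl, ← RingHom.map_det]
  refine isUnit_iff_ne_zero.mpr ?_
  simpa using (Int.cast_ne_zero (α := ℝ)).mpr (st18_expansive_det_ne_zero A hA)

lemma st18_norm_pow_tendsto_zero (hd : 0 < d) (N : Matrix (Fin d) (Fin d) ℂ)
    (hN : ∀ μ ∈ spectrum ℂ N, ‖μ‖₊ < 1) :
    Tendsto (fun n : ℕ => ‖N ^ n‖) atTop (𝓝 0) := by
  haveI : Nonempty (Fin d) := ⟨⟨0, hd⟩⟩
  haveI : CompleteSpace (Matrix (Fin d) (Fin d) ℂ) :=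
    inferInstance
  have hne : (spectrum ℂ N).Nonempty := spectrum.nonempty N
  have hρ : spectralRadius ℂ N < ((1 : ℝ≥0) : ℝ≥0∞) :=
    spectrum.spectralRadius_lt_of_forall_lt_of_nonempty hne hN
  rw [ENNReal.coe_one] at hρ
  obtain ⟨c, hc1, hc2⟩ := exists_between hρ
  have hgel := spectrum.pow_nnnorm_pow_one_div_tendsto_nhds_spectralRadius N
  have hev : ∀ᶠ n : ℕ in atTop, (‖N ^ n‖₊ : ℝ≥0∞) ^ (1 / (n : ℝ)) < c :=
    hgel.eventually_lt_const hc1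
  have hbd : ∀ᶠ n : ℕ in atTop, (‖N ^ n‖₊ : ℝ≥0∞) ≤ c ^ (n : ℕ) := by
    filter_upwards [hev, eventually_ge_atTop 1] with n hn hn1
    have hn0 : (n : ℝ) ≠ 0 := Nat.cast_ne_zero.mpr (by omega)
    calc (‖N ^ n‖₊ : ℝ≥0∞) = ((‖N ^ n‖₊ : ℝ≥0∞) ^ (1 / (n:ℝ))) ^ (n:ℝ) := by
          rw [← ENNReal.rpow_mul, one_div, inv_mul_cancel₀ hn0, ENNReal.rpow_one]
      _ ≤ c ^ (n : ℝ) := ENNReal.rpow_le_rpow hn.le (by positivity)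
      _ = c ^ (n : ℕ) := ENNReal.rpow_natCast c n
  have hc0 : Tendsto (fun n : ℕ => c ^ n) atTop (𝓝 (0 : ℝ≥0∞)) :=
    ENNReal.tendsto_pow_atTop_nhds_zero_of_lt_one hc2
  have hnn : Tendsto (fun n : ℕ => (‖N ^ n‖₊ : ℝ≥0∞)) atTop (𝓝 0) :=
    tendsto_of_tendsto_of_tendsto_of_le_of_le' tendsto_const_nhds hc0
      (Eventually.of_forall fun n => zero_le) hbd
  rw [← ENNReal.coe_zero, ENNReal.tendsto_coe] at hnn
  have h2 : Tendsto (fun n : ℕ => ((‖N ^ n‖₊ : ℝ≥0) : ℝ)) atTop (𝓝 ((0 : ℝ≥0) : ℝ)) :=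
    NNReal.tendsto_coe.mpr hnn
  simpa using h2

lemma st18_decay (hd : 0 < d) (A : Matrix (Fin d) (Fin d) ℤ) (hA : Expansive A)
    (v : Fin d → ℝ) (i : Fin d) :
    Tendsto (fun n : ℕ => ((((toR A)ᵀ)⁻¹ ^ n).mulVec v) i) atTop (𝓝 0) := by
  set Nc := ((A.map (Int.cast : ℤ → ℂ))ᵀ)⁻¹ with hNc
  set vc : Fin d → ℂ := fun j => (v j : ℂ) with hvc
  have hTdet : IsUnit ((toR A)ᵀ).det := st18_toR_det_isUnit A hA
  have hmap : ∀ n : ℕ, ((((toR A)ᵀ)⁻¹ ^ n)).map Complex.ofReal = Nc ^ n := by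
    intro n
    rw [st18_map_pow_ofReal, st18_map_inv_ofReal _ hTdet, st18_map_ofReal_toR]
  have key : Tendsto (fun n : ℕ => ‖Nc ^ n‖) atTop (𝓝 0) :=
    st18_norm_pow_tendsto_zero hd Nc (st18_spec_bound A hA)
  refine squeeze_zero_norm (f := fun n : ℕ => ((((toR A)ᵀ)⁻¹ ^ n).mulVec v) i)
      (a := fun n : ℕ => ‖Nc ^ n‖ * ‖vc‖) ?_ ?_
  · intro n
    have h1 : ‖((((toR A)ᵀ)⁻¹ ^ n).mulVec v) i‖ = ‖((Nc ^ n).mulVec vc) i‖ := by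
      rw [← Complex.norm_real, st18_mulVec_cast, hmap]
    rw [h1]
    calc ‖((Nc ^ n).mulVec vc) i‖ ≤ ‖(Nc ^ n).mulVec vc‖ := norm_le_pi_norm _ i
      _ ≤ ‖Nc ^ n‖ * ‖vc‖ := Matrix.linfty_opNorm_mulVec _ _
  · simpa using key.mul_const ‖vc‖

end St18Norm

end St18Aux
/-- decoding of an eventually periodic digit string
ω = ω₀…ω_{np−1} m₀…m_{q−1} m₀…m_{q−1} …: there is a unique (k, j) ∈ ℤ^d × ℤ/pℤ
with τ_{ω_{n'−1}}⋯τ_{ω_0}(x) ≡ (Aᵀ)^{−n'}(x + k − θ_j) + θ_{j+n'} mod ℤ^d for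
all x, n'; moreover j = j' and k = ∑_{i<np} (Aᵀ)^i ω_i + θ_{j'} − (Aᵀ)^{np} η₀,
where η₀ is the fixed point of τ_{m_{q−1}}⋯τ_{m_0}, lying in θ_{j'} − ℤ^d. -/
theorem statement18 (d : ℕ) (hd : 0 < d) (A : Matrix (Fin d) (Fin d) ℤ)
    (hA : Expansive A) (D : Set (Fin d → ℤ)) (hD : CompleteDigits A D)
    (p : ℕ) (hp : 0 < p) (θ : ZMod p → Fin d → ℝ) (l : ZMod p → Fin d → ℤ)
    (hl : ∀ j, l j ∈ D)
    (hcyc : ∀ j : ZMod p,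
      (toR A)ᵀ.mulVec (θ (j + 1)) = θ j + fun i => (l j i : ℝ))
    (hsimple : ∀ j j' : ZMod p, j ≠ j' → (θ j - θ j') ∉ intLattice d)
    (n q : ℕ) (hq : 1 ≤ q)
    (ω0 : ℕ → Fin d → ℤ) (hω0 : ∀ i, i < n * p → ω0 i ∈ D)
    (m : ℕ → Fin d → ℤ) (hm : ∀ i, i < q → m i ∈ D)
    (ω : ℕ → Fin d → ℤ)
    (hω : ∀ i, ω i = if i < n * p then ω0 i else m ((i - n * p) % q))
    (η : Fin d → ℝ) (hη : tauWord A m q η = η)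
    (j' : ZMod p) (hj' : (θ j' - η) ∈ intLattice d) :
    ∃ (k : Fin d → ℤ) (j : ZMod p),
      (∀ (x : Fin d → ℝ) (n' : ℕ),
        (tauWord A ω n' x -
          ((((toR A)ᵀ)⁻¹) ^ n').mulVec (x + (fun i => (k i : ℝ)) - θ j) -
          θ (j + (n' : ZMod p))) ∈ intLattice d) ∧
      (∀ (k₂ : Fin d → ℤ) (j₂ : ZMod p),
        (∀ (x : Fin d → ℝ) (n' : ℕ),
          (tauWord A ω n' x -
            ((((toR A)ᵀ)⁻¹) ^ n').mulVec (x + (fun i => (k₂ i : ℝ)) - θ j₂) -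
            θ (j₂ + (n' : ZMod p))) ∈ intLattice d) → k₂ = k ∧ j₂ = j) ∧
      j = j' ∧
      (fun i => (k i : ℝ)) =
        (∑ i ∈ Finset.range (n * p),
          ((toR A)ᵀ ^ i).mulVec fun i' => (ω0 i i' : ℝ)) + θ j' -
          ((toR A)ᵀ ^ (n * p)).mulVec η := by
  classical
  set T : Matrix (Fin d) (Fin d) ℝ := (toR A)ᵀ with hTdef
  set B : Matrix (Fin d) (Fin d) ℝ := T⁻¹ with hBdef
  have hTdet : IsUnit T.det := st18_toR_det_isUnit A hA
  have hTB : T * B = 1 := Matrix.mul_nonsing_inv T hTdet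
  have hBT : B * T = 1 := Matrix.nonsing_inv_mul T hTdet
  have hBTv : ∀ v : Fin d → ℝ, B.mulVec (T.mulVec v) = v := by
    intro v; rw [Matrix.mulVec_mulVec, hBT, Matrix.one_mulVec]
  have hTBv : ∀ v : Fin d → ℝ, T.mulVec (B.mulVec v) = v := by
    intro v; rw [Matrix.mulVec_mulVec, hTB, Matrix.one_mulVec]
  have hTnBn : ∀ r : ℕ, T ^ r * B ^ r = 1 := by
    intro r
    induction r with
    | zero => simp
    | succ r ih => rw [pow_succ, pow_succ', mul_assoc, ← mul_assoc T, hTB, one_mul, ih]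
  have hBnTn : ∀ r : ℕ, B ^ r * T ^ r = 1 := by
    intro r
    induction r with
    | zero => simp
    | succ r ih => rw [pow_succ', pow_succ, mul_assoc, ← mul_assoc (B ^ r), ih, one_mul, hBT]
  have hTpow_inj : ∀ (r : ℕ) (a b : Fin d → ℝ),
      (T ^ r).mulVec a = (T ^ r).mulVec b → a = b := by
    intro r a b h
    have h2 := congrArg (fun v => (B ^ r).mulVec v) h
    simpa [Matrix.mulVec_mulVec, hBnTn r, Matrix.one_mulVec] using h2
  have htau : ∀ (v : Fin d → ℤ) (x : Fin d → ℝ),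
      tauD A v x = B.mulVec (x + fun i => (v i : ℝ)) := by
    intro v x; rw [hBdef, hTdef]; rfl
  have hcycB : ∀ j : ZMod p, θ (j + 1) = B.mulVec (θ j + fun i => (l j i : ℝ)) := by
    intro j; rw [← hcyc j, hBTv]
  have hnp0 : ((n * p : ℕ) : ZMod p) = 0 := by
    have h1 : ((n * p : ℕ) : ZMod p) = (n : ZMod p) * (p : ZMod p) := by push_cast; ring
    rw [h1, ZMod.natCast_self, mul_zero]
  have hcycpow : ∀ (j : ZMod p) (r : ℕ), (T ^ r).mulVec (θ (j + (r : ZMod p)))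
      = θ j + ∑ i ∈ Finset.range r,
          (T ^ i).mulVec (fun i' => (l (j + (i : ZMod p)) i' : ℝ)) := by
    intro j r
    induction r with
    | zero => simp [Matrix.one_mulVec]
    | succ r ih =>
      have hcast : ((r + 1 : ℕ) : ZMod p) = (r : ZMod p) + 1 := by push_cast; ring
      rw [hcast, ← add_assoc, pow_succ, ← Matrix.mulVec_mulVec, hcyc (j + (r : ZMod p)),
        Matrix.mulVec_add, ih, Finset.sum_range_succ]
      abel
  have htauT : ∀ (w : ℕ → Fin d → ℤ) (x : Fin d → ℝ) (r : ℕ),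
      (T ^ r).mulVec (tauWord A w r x)
        = x + ∑ i ∈ Finset.range r, (T ^ i).mulVec (fun i' => (w i i' : ℝ)) := by
    intro w x r
    induction r with
    | zero => simp [st18_tauWord_zero, Matrix.one_mulVec]
    | succ r ih =>
      rw [st18_tauWord_succ, htau, pow_succ, ← Matrix.mulVec_mulVec, hTBv,
        Matrix.mulVec_add, ih, Finset.sum_range_succ]
      abel
  have htauDiff : ∀ (x y : Fin d → ℝ) (r : ℕ),
      tauWord A ω r x - tauWord A ω r y = (B ^ r).mulVec (x - y) := by
    intro x y r
    induction r with
    | zero => simp [st18_tauWord_zero, Matrix.one_mulVec]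
    | succ r ih =>
      rw [st18_tauWord_succ, st18_tauWord_succ, htau, htau, ← Matrix.mulVec_sub,
        pow_succ', ← Matrix.mulVec_mulVec, ← ih]
      congr 1
      abel
  -- the candidate k (as a real vector K)
  set K : Fin d → ℝ := (∑ i ∈ Finset.range (n * p),
      (T ^ i).mulVec fun i' => (ω0 i i' : ℝ)) + θ j' - (T ^ (n * p)).mulVec η with hKdef
  have hθnp : θ (j' + ((n * p : ℕ) : ZMod p)) = θ j' := by rw [hnp0, add_zero]
  have hTθ : (T ^ (n * p)).mulVec (θ j')
      = θ j' + ∑ i ∈ Finset.range (n * p),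
          (T ^ i).mulVec (fun i' => (l (j' + (i : ZMod p)) i' : ℝ)) := by
    conv_lhs => rw [← hθnp]
    exact hcycpow j' (n * p)
  have hsum : ∑ i ∈ Finset.range (n * p), (T ^ i).mulVec (fun i' => (ω i i' : ℝ))
      = ∑ i ∈ Finset.range (n * p), (T ^ i).mulVec (fun i' => (ω0 i i' : ℝ)) :=
    Finset.sum_congr rfl (fun i hi => by rw [hω i, if_pos (Finset.mem_range.mp hi)])
  -- the error sequence e
  set e : ℕ → Fin d → ℝ := fun r =>
    tauWord A ω r 0 - (B ^ r).mulVec (K - θ j') - θ (j' + (r : ZMod p)) with hedef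
  have he_succ : ∀ r : ℕ, e (r + 1)
      = B.mulVec (e r + (fun i => (ω r i : ℝ))
          - (fun i => (l (j' + (r : ZMod p)) i : ℝ))) := by
    intro r
    have hθs : θ (j' + ((r + 1 : ℕ) : ZMod p))
        = B.mulVec (θ (j' + (r : ZMod p)) + fun i => (l (j' + (r : ZMod p)) i : ℝ)) := by
      have hcast : ((r + 1 : ℕ) : ZMod p) = (r : ZMod p) + 1 := by push_cast; ring
      rw [hcast, ← add_assoc, hcycB]
    simp only [hedef]
    rw [st18_tauWord_succ, htau, hθs, pow_succ', ← Matrix.mulVec_mulVec,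
      ← Matrix.mulVec_sub, ← Matrix.mulVec_sub]
    congr 1
    abel
  have he_np : e (n * p) = η - θ j' := by
    apply hTpow_inj (n * p)
    simp only [hedef]
    rw [Matrix.mulVec_sub, Matrix.mulVec_sub, htauT, Matrix.mulVec_mulVec, hTnBn,
      Matrix.one_mulVec, hθnp, hTθ, hsum, hKdef]
    conv_rhs => rw [Matrix.mulVec_sub]
    rw [hTθ]
    abel
  -- K is an integer vector
  have hKlat : K ∈ intLattice d := by
    have hKeq : K = (∑ i ∈ Finset.range (n * p), (T ^ i).mulVec fun i' => (ω0 i i' : ℝ))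
        + (T ^ (n * p)).mulVec (θ j' - η)
        - ∑ i ∈ Finset.range (n * p),
            (T ^ i).mulVec (fun i' => (l (j' + (i : ZMod p)) i' : ℝ)) := by
      rw [hKdef, Matrix.mulVec_sub, hTθ]
      abel
    rw [hKeq]
    refine sub_mem (add_mem ?_ ?_) ?_
    · exact AddSubgroup.sum_mem _ (fun i _ => st18_intLattice_T_pow A i _ (st18_intLattice_cast _))
    · exact st18_intLattice_T_pow A (n * p) _ hj'
    · exact AddSubgroup.sum_mem _ (fun i _ => st18_intLattice_T_pow A i _ (st18_intLattice_cast _))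
  have hKl' : ∀ i, ∃ z : ℤ, K i = (z : ℝ) := hKlat
  choose k hk using hKl'
  have hkK : (fun i => (k i : ℝ)) = K := funext fun i => (hk i).symm
  -- backward integrality step
  have hback : ∀ r : ℕ, e (r + 1) ∈ intLattice d → e r ∈ intLattice d := by
    intro r hr
    have h2 : T.mulVec (e (r + 1)) = e r + (fun i => (ω r i : ℝ))
        - (fun i => (l (j' + (r : ZMod p)) i : ℝ)) := by rw [he_succ r, hTBv]
    have h3 : e r = T.mulVec (e (r + 1)) - (fun i => (ω r i : ℝ))
        + (fun i => (l (j' + (r : ZMod p)) i : ℝ)) := by rw [h2]; abel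
    rw [h3]
    refine add_mem (sub_mem ?_ (st18_intLattice_cast _)) (st18_intLattice_cast _)
    have h4 := st18_intLattice_mulVec Aᵀ hr
    rw [← st18_toR_transpose] at h4
    exact h4
  -- the periodic tail
  set mper : ℕ → Fin d → ℤ := fun i => m (i % q) with hmperdef
  set ηs : ℕ → Fin d → ℝ := fun r => tauWord A mper r η with hηsdef
  have hηsq : tauWord A mper q η = η := by
    rw [st18_tauWord_congr A mper m η q
      (fun i hi => by simp only [hmperdef]; rw [Nat.mod_eq_of_lt hi]), hη]
  have hηper : ∀ r, ηs (q + r) = ηs r := by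
    have hshift : (fun i => mper (i + q)) = mper := funext fun i => by
      simp only [hmperdef]; exact congrArg m (Nat.add_mod_right i q)
    intro r
    simp only [hηsdef]
    rw [st18_tauWord_shift A mper η q r, hshift, hηsq]
  have hηmul : ∀ (s r : ℕ), ηs (r + q * s) = ηs r := by
    intro s
    induction s with
    | zero => intro r; simp
    | succ s ih =>
      intro r
      have h5 : r + q * (s + 1) = q + (r + q * s) := by ring
      rw [h5, hηper, ih]
  have hE : ∀ r : ℕ, e (n * p + r) = ηs r - θ (j' + ((n * p + r : ℕ) : ZMod p)) := by
    intro r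
    induction r with
    | zero => rw [Nat.add_zero, he_np, hθnp]; rfl
    | succ r ih =>
      have hstep : e (n * p + (r + 1)) = B.mulVec (e (n * p + r)
          + (fun i => (ω (n * p + r) i : ℝ))
          - (fun i => (l (j' + ((n * p + r : ℕ) : ZMod p)) i : ℝ))) := he_succ (n * p + r)
      have hωr : ω (n * p + r) = m (r % q) := by
        rw [hω, if_neg (by omega)]
        have h6 : n * p + r - n * p = r := by omega
        rw [h6]
      have hθstep : θ (j' + ((n * p + (r + 1) : ℕ) : ZMod p))
          = B.mulVec (θ (j' + ((n * p + r : ℕ) : ZMod p))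
              + fun i => (l (j' + ((n * p + r : ℕ) : ZMod p)) i : ℝ)) := by
        have hcast : ((n * p + (r + 1) : ℕ) : ZMod p)
            = ((n * p + r : ℕ) : ZMod p) + 1 := by push_cast; ring
        rw [hcast, ← add_assoc, hcycB]
      have hηstep : ηs (r + 1) = B.mulVec (ηs r + fun i => ((m (r % q)) i : ℝ)) := by
        simp only [hηsdef]
        rw [st18_tauWord_succ, htau]
      rw [hstep, hωr, ih, hηstep, hθstep, ← Matrix.mulVec_sub]
      congr 1
      abel
  have heper : ∀ r : ℕ, e (n * p + r + p * q) = e (n * p + r) := by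
    intro r
    have h7 : n * p + r + p * q = n * p + (r + q * p) := by ring
    have hc : ((n * p + (r + q * p) : ℕ) : ZMod p) = ((n * p + r : ℕ) : ZMod p) := by
      push_cast [ZMod.natCast_self]; ring
    rw [h7, hE (r + q * p), hE r, hηmul p r, hc]
  have claim1 : ∀ s : ℕ, e (n * p + (p * q) * s) ∈ intLattice d := by
    intro s
    induction s with
    | zero =>
      rw [Nat.mul_zero, Nat.add_zero, he_np]
      have h8 := neg_mem hj'
      rwa [neg_sub] at h8
    | succ s ih =>
      have h9 : n * p + (p * q) * (s + 1) = n * p + (p * q) * s + p * q := by ring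
      rw [h9, heper ((p * q) * s)]
      exact ih
  have claim2 : ∀ (s r : ℕ), e (r + s) ∈ intLattice d → e r ∈ intLattice d := by
    intro s
    induction s with
    | zero => intro r h; exact h
    | succ s ih => intro r h; exact ih r (hback (r + s) h)
  have helat : ∀ r : ℕ, e r ∈ intLattice d := by
    intro r
    have h10 : r ≤ n * p + (p * q) * r :=
      le_trans (Nat.le_mul_of_pos_left r (Nat.mul_pos hp hq)) (Nat.le_add_left _ _)
    obtain ⟨s, hs⟩ := Nat.le.dest h10
    exact claim2 s r (by rw [hs]; exact claim1 r)
  -- the existence statement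
  have hexistK : ∀ (x : Fin d → ℝ) (r : ℕ),
      (tauWord A ω r x - (B ^ r).mulVec (x + K - θ j') - θ (j' + (r : ZMod p)))
        ∈ intLattice d := by
    intro x r
    have h1 := htauDiff x 0 r
    rw [sub_zero] at h1
    have hEq : tauWord A ω r x - (B ^ r).mulVec (x + K - θ j') - θ (j' + (r : ZMod p))
        = e r := by
      simp only [hedef]
      have h2 : x + K - θ j' = (K - θ j') + x := by abel
      rw [h2, Matrix.mulVec_add, ← h1]
      abel
    rw [hEq]
    exact helat r
  refine ⟨k, j', ?_, ?_, rfl, hkK.trans hKdef⟩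
  · intro x r
    rw [hkK]
    exact hexistK x r
  · -- uniqueness
    intro k₂ j₂ h₂
    set w : Fin d → ℝ := ((fun i => (k₂ i : ℝ)) - θ j₂) - (K - θ j') with hwdef
    have step1 : ∀ r : ℕ,
        ((B ^ r).mulVec w + (θ (j₂ + (r : ZMod p)) - θ (j' + (r : ZMod p))))
          ∈ intLattice d := by
      intro r
      have h1 := hexistK 0 r
      have h2 := h₂ 0 r
      have h3 := sub_mem h1 h2
      have h4 : (tauWord A ω r 0 - (B ^ r).mulVec (0 + K - θ j') - θ (j' + (r : ZMod p)))
          - (tauWord A ω r 0 - (B ^ r).mulVec (0 + (fun i => (k₂ i : ℝ)) - θ j₂)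
              - θ (j₂ + (r : ZMod p)))
          = (B ^ r).mulVec w + (θ (j₂ + (r : ZMod p)) - θ (j' + (r : ZMod p))) := by
        simp only [hwdef, zero_add, Matrix.mulVec_sub]
        abel
      rwa [h4] at h3
    have hcastp : ∀ r : ℕ, ((r + p : ℕ) : ZMod p) = (r : ZMod p) := by
      intro r; push_cast [ZMod.natCast_self]; ring
    set c : Fin d → ℝ := w - (B ^ p).mulVec w with hcdef
    have step2 : ∀ r : ℕ, (B ^ r).mulVec c ∈ intLattice d := by
      intro r
      have h1 := step1 r
      have h2 := step1 (r + p)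
      rw [hcastp r] at h2
      have h3 := sub_mem h1 h2
      have h4 : ((B ^ r).mulVec w + (θ (j₂ + (r : ZMod p)) - θ (j' + (r : ZMod p))))
          - ((B ^ (r + p)).mulVec w + (θ (j₂ + (r : ZMod p)) - θ (j' + (r : ZMod p))))
          = (B ^ r).mulVec c := by
        simp only [hcdef, Matrix.mulVec_sub, pow_add, ← Matrix.mulVec_mulVec]
        abel
      rwa [h4] at h3
    have step3 : c = 0 := by
      have hz : ∀ i : Fin d, ∀ᶠ r : ℕ in atTop, ((B ^ r).mulVec c) i = 0 := by
        intro i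
        have hd2 : Filter.Tendsto (fun r : ℕ => ((B ^ r).mulVec c) i)
            Filter.atTop (nhds 0) := by
          rw [hBdef, hTdef]
          exact st18_decay hd A hA c i
        filter_upwards [hd2 (Metric.ball_mem_nhds (0 : ℝ) one_pos)] with r hr
        simp at hr
        obtain ⟨z, hz⟩ := step2 r i
        rw [hz] at hr ⊢
        have h7 : z = 0 := by
          rw [← Int.cast_abs] at hr
          exact Int.abs_lt_one_iff.mp (by exact_mod_cast hr)
        rw [h7]; norm_num
      have hzz : ∀ᶠ r : ℕ in Filter.atTop, ∀ i, ((B ^ r).mulVec c) i = 0 :=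
        Filter.eventually_all.mpr hz
      obtain ⟨r, hr⟩ := hzz.exists
      have h7 : (B ^ r).mulVec c = 0 := funext hr
      have h8 := congrArg (fun v => (T ^ r).mulVec v) h7
      simpa [Matrix.mulVec_mulVec, hTnBn r, Matrix.one_mulVec, Matrix.mulVec_zero] using h8
    have hw0 : w = 0 := by
      have h9 : w - (B ^ p).mulVec w = 0 := by rw [← hcdef]; exact step3
      have hBp : (B ^ p).mulVec w = w := (sub_eq_zero.mp h9).symm
      have hBps : ∀ s : ℕ, (B ^ (p * s)).mulVec w = w := by
        intro s
        induction s with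
        | zero => simp [Matrix.one_mulVec]
        | succ s ih =>
          have h10 : p * (s + 1) = p * s + p := by ring
          rw [h10, pow_add, ← Matrix.mulVec_mulVec, hBp, ih]
      funext i
      have hmono : Filter.Tendsto (fun s : ℕ => p * s) Filter.atTop Filter.atTop :=
        Filter.tendsto_atTop_mono (fun s => Nat.le_mul_of_pos_left s hp) Filter.tendsto_id
      have hd3 : Filter.Tendsto (fun s : ℕ => ((B ^ (p * s)).mulVec w) i)
          Filter.atTop (nhds 0) := by
        have hd4 : Filter.Tendsto (fun r : ℕ => ((B ^ r).mulVec w) i)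
            Filter.atTop (nhds 0) := by
          rw [hBdef, hTdef]
          exact st18_decay hd A hA w i
        exact hd4.comp hmono
      have hconst : (fun s : ℕ => ((B ^ (p * s)).mulVec w) i) = fun _ => w i :=
        funext fun s => by rw [hBps s]
      rw [hconst] at hd3
      have h11 := tendsto_nhds_unique tendsto_const_nhds hd3
      simpa using h11
    have hj2 : j₂ = j' := by
      by_contra hne
      have h11 := step1 0
      rw [hw0] at h11
      simp only [Matrix.mulVec_zero, Nat.cast_zero, add_zero, zero_add] at h11
      exact hsimple j₂ j' hne h11
    refine ⟨?_, hj2⟩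
    have h12 : w = (fun i => (k₂ i : ℝ)) - K := by rw [hwdef, hj2]; abel
    rw [hw0] at h12
    have h13 : (fun i => (k₂ i : ℝ)) = K := by
      have := h12.symm
      rwa [sub_eq_zero] at this
    funext i
    have h14 := congrFun (h13.trans hkK.symm) i
    exact_mod_cast h14
end

section
/- Assume (A, D) satisfies the tiling condition, and assume that X(A^T,D) equals the closure of its interior. Let (θ_j)_{j∈ℤ/pℤ} in ℝ^d and (l_j)_{j∈ℤ/pℤ} in D form a cycle of length p for (τ_d)_{d∈D} with θ_0 ∈ X(A^T,D). If there exists k ∈ ℤ^d with k ≠ 0 and θ_0 − k ∈ X(A^T,D), then every point θ_j, j ∈ ℤ/pℤ, lies in the topological boundary of X(A^T,D). -/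
open Matrix MeasureTheory Filter Topology

/-- The tiling condition: X(Aᵀ,D) tiles ℝ^d by ℤ^d up to Lebesgue-null sets. -/
def TilingCondition (d : ℕ) (A : Matrix (Fin d) (Fin d) ℤ) (D : Set (Fin d → ℤ)) : Prop :=
  volume (Set.univ \ ⋃ k : Fin d → ℤ,
      (fun y => y + fun i => (k i : ℝ)) '' attractor d A D) = 0 ∧
  ∀ k k' : Fin d → ℤ, k ≠ k' →
    volume (((fun y => y + fun i => (k i : ℝ)) '' attractor d A D) ∩
      ((fun y => y + fun i => (k' i : ℝ)) '' attractor d A D)) = 0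

lemma det_toR_ne {d : ℕ} {A : Matrix (Fin d) (Fin d) ℤ} (hA : Expansive A) :
    (toR A).det ≠ 0 := by
  have h0 : ¬ (Matrix.charpoly (A.map (Int.cast : ℤ → ℂ))).IsRoot 0 := by
    intro h
    have := hA 0 h
    norm_num at this
  have hev : (Matrix.charpoly (A.map (Int.cast : ℤ → ℂ))).eval 0 ≠ 0 := h0
  have hdetC : (A.map (Int.cast : ℤ → ℂ)).det ≠ 0 := by
    rw [Matrix.det_eq_sign_charpoly_coeff, Polynomial.coeff_zero_eq_eval_zero]
    intro h
    rcases mul_eq_zero.mp h with h | h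
    · exact pow_ne_zero _ (by norm_num : (-1 : ℂ) ≠ 0) h
    · exact hev h
  have e1 : (A.map (Int.cast : ℤ → ℂ)).det = ((A.det : ℤ) : ℂ) :=
    (RingHom.map_det (Int.castRingHom ℂ) A).symm
  have hInt : A.det ≠ 0 := by
    intro h; apply hdetC; rw [e1, h]; simp
  have e2 : (toR A).det = ((A.det : ℤ) : ℝ) :=
    (RingHom.map_det (Int.castRingHom ℝ) A).symm
  rw [e2]; exact_mod_cast hInt

lemma cont_mulVec {d : ℕ} (M : Matrix (Fin d) (Fin d) ℝ) : Continuous M.mulVec := by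
  have := LinearMap.continuous_of_finiteDimensional (M.mulVecLin)
  exact this

lemma tauD_homeo {d : ℕ} {A : Matrix (Fin d) (Fin d) ℤ} (hA : Expansive A)
    (v : Fin d → ℤ) : IsOpenMap (tauD A v) := by
  have hdet : IsUnit ((toR A)ᵀ).det := by
    rw [Matrix.det_transpose]; exact (det_toR_ne hA).isUnit
  let e : Homeomorph (Fin d → ℝ) (Fin d → ℝ) :=
  { toFun := tauD A v
    invFun := fun y => ((toR A)ᵀ).mulVec y - fun i => (v i : ℝ)
    left_inv := by
      intro x
      simp only [tauD, Matrix.mulVec_mulVec, Matrix.mul_nonsing_inv _ hdet, Matrix.one_mulVec]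
      abel
    right_inv := by
      intro y
      simp only [tauD, sub_add_cancel, Matrix.mulVec_mulVec,
        Matrix.nonsing_inv_mul _ hdet, Matrix.one_mulVec]
    continuous_toFun := (cont_mulVec _).comp (continuous_id.add continuous_const)
    continuous_invFun := ((cont_mulVec _)).sub continuous_const }
  exact e.isOpenMap

lemma tauD_mem {d : ℕ} {A : Matrix (Fin d) (Fin d) ℤ} {D : Set (Fin d → ℤ)}
    {v : Fin d → ℤ} (hv : v ∈ D) {x : Fin d → ℝ} (hx : x ∈ attractor d A D) :
    tauD A v x ∈ attractor d A D := by
  obtain ⟨dig, hdig, hsum⟩ := hx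
  set B := ((toR A)ᵀ)⁻¹ with hB
  refine ⟨fun n => Nat.rec v (fun m _ => dig m) n, ?_, ?_⟩
  · intro j; cases j with
    | zero => exact hv
    | succ m => exact hdig m
  · set g : ℕ → (Fin d → ℝ) := fun j => (B ^ (j + 1)).mulVec
      fun i => ((Nat.rec v (fun m _ => dig m) j : Fin d → ℤ) i : ℝ) with hg
    have hmap : HasSum (fun j => B.mulVec ((B ^ (j+1)).mulVec fun i => ((dig j i : ℤ) : ℝ)))
        (B.mulVec x) := by
      have := hsum.mapL (LinearMap.toContinuousLinearMap B.mulVecLin)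
      simpa [Matrix.mulVecLin] using this
    have hshift : HasSum (fun j => g (j + 1)) (B.mulVec x) := by
      have heq : (fun j => g (j + 1)) =
          fun j => B.mulVec ((B ^ (j+1)).mulVec fun i => ((dig j i : ℤ) : ℝ)) := by
        funext j
        simp [hg, Matrix.mulVec_mulVec, pow_succ' B (j+1)]
      rw [heq]
      exact hmap
    have hfull : HasSum g (B.mulVec x + ∑ i ∈ Finset.range 1, g i) :=
      (hasSum_nat_add_iff 1).mp hshift
    have : tauD A v x = B.mulVec x + ∑ i ∈ Finset.range 1, g i := by
      simp [tauD, hg, Matrix.mulVec_add, pow_one, hB]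
    rw [this]
    exact hfull

/-- under the tiling condition, if a cycle point θ₀ ∈ X(Aᵀ,D)
has a nontrivial integer translate θ₀ − k also in X(Aᵀ,D), then the whole
cycle lies on the topological boundary of X(Aᵀ,D). -/
theorem statement19 (d : ℕ) (hd : 0 < d) (A : Matrix (Fin d) (Fin d) ℤ)
    (hA : Expansive A) (D : Set (Fin d → ℤ)) (hD : CompleteDigits A D)
    (htile : TilingCondition d A D)
    (hreg : closure (interior (attractor d A D)) = attractor d A D)
    (p : ℕ) (hp : 0 < p) (θ : ZMod p → Fin d → ℝ) (l : ZMod p → Fin d → ℤ)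
    (hl : ∀ j, l j ∈ D)
    (hcyc : ∀ j : ZMod p,
      (toR A)ᵀ.mulVec (θ (j + 1)) = θ j + fun i => (l j i : ℝ))
    (hθ0 : θ 0 ∈ attractor d A D)
    (k : Fin d → ℤ) (hk : k ≠ 0)
    (hθk : (θ 0 - fun i => (k i : ℝ)) ∈ attractor d A D) :
    ∀ j : ZMod p, θ j ∈ frontier (attractor d A D) := by
  set X := attractor d A D with hX
  haveI : NeZero p := ⟨hp.ne'⟩
  have hdet : IsUnit ((toR A)ᵀ).det := by
    rw [Matrix.det_transpose]; exact (det_toR_ne hA).isUnit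
  have hXclosed : IsClosed X := hreg ▸ isClosed_closure
  have step : ∀ j : ZMod p, θ (j + 1) = tauD A (l j) (θ j) := by
    intro j
    rw [tauD, ← hcyc j, Matrix.mulVec_mulVec, Matrix.nonsing_inv_mul _ hdet,
      Matrix.one_mulVec]
  have memX : ∀ j, θ j ∈ X := by
    have h : ∀ n : ℕ, θ ((0 : ZMod p) + (n : ZMod p)) ∈ X := by
      intro n
      induction n with
      | zero => simpa using hθ0
      | succ m ih =>
          have e : ((0 : ZMod p) + ((m + 1 : ℕ) : ZMod p)) =
              ((0 : ZMod p) + (m : ZMod p)) + 1 := by push_cast; ring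
          rw [e, step]
          exact tauD_mem (hl _) ih
    intro j
    have := h j.val
    rwa [show ((0 : ZMod p) + ((j.val : ℕ) : ZMod p)) = j by
      simp [ZMod.natCast_val, ZMod.cast_id]] at this
  have stepInt : ∀ j : ZMod p, θ j ∈ interior X → θ (j + 1) ∈ interior X := by
    intro j hj
    rw [step j]
    have hopen : IsOpen (tauD A (l j) '' interior X) :=
      (tauD_homeo hA (l j)) _ isOpen_interior
    refine mem_interior.mpr ⟨tauD A (l j) '' interior X, ?_, hopen, ⟨θ j, hj, rfl⟩⟩
    rintro y ⟨z, hz, rfl⟩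
    exact tauD_mem (hl j) (interior_subset hz)
  have propagate : ∀ n : ℕ, ∀ j : ZMod p, θ j ∈ interior X →
      θ (j + (n : ZMod p)) ∈ interior X := by
    intro n
    induction n with
    | zero => intro j hj; simpa using hj
    | succ m ih =>
        intro j hj
        have e : (j + ((m + 1 : ℕ) : ZMod p)) = (j + (m : ZMod p)) + 1 := by
          push_cast; ring
        rw [e]
        exact stepInt _ (ih j hj)
  have hθ0ni : θ 0 ∉ interior X := by
    intro hint
    obtain ⟨ε, hε, hball⟩ := Metric.mem_nhds_iff.mp (mem_interior_iff_mem_nhds.mp hint)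
    set c : Fin d → ℝ := fun i => (k i : ℝ) with hc
    have hclos : θ 0 - c ∈ closure (interior X) := by rw [hreg]; exact hθk
    have hmeets : (Metric.ball (θ 0 - c) ε ∩ interior X).Nonempty := by
      have := mem_closure_iff.mp hclos (Metric.ball (θ 0 - c) ε)
        Metric.isOpen_ball (Metric.mem_ball_self hε)
      exact this
    set V := Metric.ball (θ 0 - c) ε ∩ interior X with hV
    have hVopen : IsOpen V := Metric.isOpen_ball.inter isOpen_interior
    set W := (fun y => y + c) '' V with hW
    have hWopen : IsOpen W := (Homeomorph.addRight c).isOpenMap V hVopen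
    have hWne : W.Nonempty := hmeets.image _
    have himg0 : (fun y => y + fun i => (((0 : Fin d → ℤ)) i : ℝ)) '' X = X := by
      have h0 : (fun i => (((0 : Fin d → ℤ)) i : ℝ)) = (0 : Fin d → ℝ) := by
        funext i; simp
      rw [h0]
      simp
    have hWsub : W ⊆ ((fun y => y + fun i => (((0 : Fin d → ℤ)) i : ℝ)) '' X) ∩
        ((fun y => y + fun i => (k i : ℝ)) '' X) := by
      rintro w ⟨y, ⟨hyball, hyint⟩, rfl⟩
      constructor
      · rw [himg0]
        apply hball
        have : dist (y + c) (θ 0) < ε := by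
          have e : θ 0 = (θ 0 - c) + c := by abel
          rw [e, dist_add_right]
          exact hyball
        exact this
      · exact ⟨y, interior_subset hyint, rfl⟩
    have h0k : (0 : Fin d → ℤ) ≠ k := fun h => hk h.symm
    have hzero : volume W = 0 := measure_mono_null hWsub (htile.2 0 k h0k)
    have hpos : 0 < volume W := hWopen.measure_pos volume hWne
    exact hpos.ne' hzero
  intro j
  rw [hXclosed.frontier_eq]
  refine ⟨memX j, ?_⟩
  intro hj
  apply hθ0ni
  have hle : j.val ≤ p := (ZMod.val_lt j).le
  have hcast : (((p - j.val : ℕ)) : ZMod p) = -j := by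
    rw [Nat.cast_sub hle]
    simp [ZMod.natCast_self, ZMod.natCast_val, ZMod.cast_id]
  have := propagate (p - j.val) j hj
  rwa [hcast, add_neg_cancel] at this
end
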